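/- Let $a \geq 2$ be an integer, $A = \{a^i : i \geq 0\}$, and let $M$ be an infinite set of positive integers containing $\{1, \ldots, a-1\}$ with no element divisible by $a$. Then $\liminf_{n \to \infty} \frac{\log p_{A,M}(n)}{\log n} = 0$; in particular $p_{A,M}$ does not have superpolynomial growth. -/

import Mathlib

open Filter

/-- `f` is a representation of `n` with parts in `A` and multiplicities in `M`:
`n = ∑ a ∈ A, m_a * a` with each nonzero multiplicity lying in `M`. -/
def IsRepr (A M : Set ℕ) (n : ℕ) (f : ℕ →₀ ℕ) : Prop :=
  (∀ a ∈ f.support, a ∈ A) ∧ (∀ a ∈ f.support, f a ∈ M) ∧ f.sum (fun a m => m * a) = n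

/-- number of partitions of `n` with parts in `A` and multiplicities in `M` -/
noncomputable def pAM (A M : Set ℕ) (n : ℕ) : ℕ :=
  Nat.card {f : ℕ →₀ ℕ // IsRepr A M n f}

/-- number of partitions of `n` with parts in `A` (unrestricted multiplicities) -/
noncomputable def pA (A : Set ℕ) (n : ℕ) : ℕ :=
  pAM A {m | 0 < m} n

/-- counting function of a set of positive integers -/
noncomputable def cnt (S : Set ℕ) (x : ℝ) : ℕ :=
  Nat.card {a : ℕ // a ∈ S ∧ (a : ℝ) ≤ x}

lemma unique_repr (a : ℕ) (ha : 2 ≤ a) (M : Set ℕ)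
    (hMpos : ∀ m ∈ M, 0 < m) (hMnd : ∀ m ∈ M, ¬ a ∣ m) :
    ∀ k (f : ℕ →₀ ℕ), IsRepr {x : ℕ | ∃ i : ℕ, x = a ^ i} M (a ^ k) f →
      f = Finsupp.single (a ^ k) 1 := by
  have ha0 : 0 < a := by omega
  intro k
  induction k with
  | zero =>
    intro f ⟨hA, hM, hsum⟩
    simp only [pow_zero] at hsum ⊢
    have hterm : ∀ x ∈ f.support, 1 ≤ f x * x := by
      intro x hx
      obtain ⟨i, rfl⟩ := hA x hx
      have h1 := hMpos _ (hM _ hx)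
      have h2 : 1 ≤ a ^ i := Nat.one_le_pow _ _ ha0
      exact Nat.one_le_iff_ne_zero.mpr (by positivity)
    have hcard : f.support.card ≤ 1 := by
      calc f.support.card = ∑ _x ∈ f.support, 1 := by simp
        _ ≤ ∑ x ∈ f.support, f x * x := Finset.sum_le_sum hterm
        _ = 1 := hsum
    have hne : f.support.Nonempty := by
      by_contra h
      rw [Finset.not_nonempty_iff_eq_empty] at h
      rw [Finsupp.sum, h] at hsum
      simp at hsum
    obtain ⟨x, hx⟩ := Finset.card_eq_one.mp (le_antisymm hcard hne.card_pos)
    have hsum' : f x * x = 1 := by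
      rw [Finsupp.sum, hx, Finset.sum_singleton] at hsum
      exact hsum
    have hx1 : x = 1 := Nat.eq_one_of_mul_eq_one_left hsum'
    have hfx : f x = 1 := Nat.eq_one_of_mul_eq_one_right hsum'
    subst hx1
    rw [Finsupp.eq_single_iff]
    exact ⟨by rw [hx], hfx⟩
  | succ k ih =>
    intro f ⟨hA, hM, hsum⟩
    have h1 : f 1 = 0 := by
      by_contra h1
      have hmem : (1 : ℕ) ∈ f.support := Finsupp.mem_support_iff.mpr h1
      have hdvd : a ∣ ∑ x ∈ f.support.erase 1, f x * x := by
        apply Finset.dvd_sum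
        intro x hx
        obtain ⟨hx1, hxs⟩ := Finset.mem_erase.mp hx
        obtain ⟨i, rfl⟩ := hA x hxs
        have hi : i ≠ 0 := by rintro rfl; simp at hx1
        exact Dvd.dvd.mul_left (dvd_pow_self a hi) _
      have heq : f 1 * 1 + ∑ x ∈ f.support.erase 1, f x * x = a ^ (k + 1) := by
        rw [Finsupp.sum] at hsum
        exact (Finset.add_sum_erase f.support (fun x => f x * x) hmem).trans hsum
      have hdvd2 : a ∣ (∑ x ∈ f.support.erase 1, f x * x) + f 1 * 1 := by
        rw [Nat.add_comm, heq]; exact dvd_pow_self a (Nat.succ_ne_zero k)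
      have : a ∣ f 1 := by simpa using (Nat.dvd_add_right hdvd).mp hdvd2
      exact hMnd _ (hM 1 hmem) this
    have hsupp : ∀ x ∈ f.support, ∃ y, x = a * y := by
      intro x hx
      obtain ⟨i, rfl⟩ := hA x hx
      have hi : i ≠ 0 := by
        rintro rfl
        simp only [pow_zero] at hx
        exact (Finsupp.mem_support_iff.mp hx) h1
      exact ⟨a ^ (i - 1), by rw [← pow_succ']; congr 1; omega⟩
    have hbij : Set.BijOn (fun y => a * y) ((fun y => a * y) ⁻¹' ↑f.support) ↑f.support := by
      refine ⟨fun y hy => hy, fun y _ z _ h => Nat.eq_of_mul_eq_mul_left ha0 h, ?_⟩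
      intro x hx
      obtain ⟨y, rfl⟩ := hsupp x hx
      exact ⟨y, hx, rfl⟩
    set g := Finsupp.comapDomain (fun y => a * y) f hbij.injOn with hgdef
    have hgapp : ∀ y, g y = f (a * y) := fun y => rfl
    have hgsum : g.sum (fun y m => m * (a * y)) = a ^ (k + 1) :=
      (Finsupp.sum_comapDomain (fun y => a * y) f (fun x m => m * x) hbij).trans hsum
    have hgsum' : g.sum (fun y m => m * y) = a ^ k := by
      have hmul : g.sum (fun y m => m * (a * y)) = a * g.sum (fun y m => m * y) := by
        rw [Finsupp.sum, Finsupp.sum, Finset.mul_sum]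
        exact Finset.sum_congr rfl (fun y _ => by ring)
      have : a * g.sum (fun y m => m * y) = a * a ^ k := by
        rw [← hmul, hgsum, pow_succ']
      exact Nat.eq_of_mul_eq_mul_left ha0 this
    have hgsuppmem : ∀ y, y ∈ g.support → a * y ∈ f.support := by
      intro y hy
      exact Finsupp.mem_support_iff.mpr (by rw [← hgapp]; exact Finsupp.mem_support_iff.mp hy)
    have hgrepr : IsRepr {x : ℕ | ∃ i : ℕ, x = a ^ i} M (a ^ k) g := by
      refine ⟨?_, fun y hy => by rw [hgapp]; exact hM _ (hgsuppmem y hy), hgsum'⟩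
      intro y hy
      obtain ⟨i, hi⟩ := hA _ (hgsuppmem y hy)
      have hi0 : i ≠ 0 := by
        rintro rfl
        simp only [pow_zero] at hi
        have := Nat.eq_one_of_mul_eq_one_right hi
        omega
      refine ⟨i - 1, ?_⟩
      have : a * y = a * a ^ (i - 1) := by
        rw [hi, ← pow_succ']; congr 1; omega
      exact Nat.eq_of_mul_eq_mul_left ha0 this
    have hgs := ih g hgrepr
    rw [Finsupp.eq_single_iff]
    constructor
    · intro x hx
      obtain ⟨y, rfl⟩ := hsupp x hx
      have hy : y ∈ g.support := Finsupp.mem_support_iff.mpr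
        (by rw [hgapp]; exact Finsupp.mem_support_iff.mp hx)
      rw [hgs, Finsupp.support_single_ne_zero _ one_ne_zero] at hy
      rw [Finset.mem_singleton] at hy
      subst hy
      rw [Finset.mem_singleton, ← pow_succ']
    · have : f (a * a ^ k) = g (a ^ k) := (hgapp _).symm
      rw [← pow_succ'] at this
      rw [this, hgs, Finsupp.single_eq_same]

lemma pAM_pow_eq_one (a : ℕ) (ha : 2 ≤ a) (M : Set ℕ)
    (hMpos : ∀ m ∈ M, 0 < m) (hM1 : 1 ∈ M) (hMnd : ∀ m ∈ M, ¬ a ∣ m) (k : ℕ) :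
    pAM {x : ℕ | ∃ i : ℕ, x = a ^ i} M (a ^ k) = 1 := by
  rw [pAM, Nat.card_eq_one_iff_unique]
  constructor
  · refine ⟨fun x y => Subtype.ext ?_⟩
    rw [unique_repr a ha M hMpos hMnd k x.1 x.2, unique_repr a ha M hMpos hMnd k y.1 y.2]
  · refine ⟨⟨Finsupp.single (a ^ k) 1, ?_, ?_, ?_⟩⟩
    · intro x hx
      rw [Finsupp.support_single_ne_zero _ one_ne_zero, Finset.mem_singleton] at hx
      exact ⟨k, hx⟩
    · intro x hx
      rw [Finsupp.support_single_ne_zero _ one_ne_zero, Finset.mem_singleton] at hx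
      subst hx
      rw [Finsupp.single_eq_same]
      exact hM1
    · rw [Finsupp.sum_single_index (by simp)]
      simp

theorem stmt10 (a : ℕ) (ha : 2 ≤ a) (M : Set ℕ) (hMinf : M.Infinite)
    (hMpos : ∀ m ∈ M, 0 < m)
    (hM1 : ∀ m : ℕ, 1 ≤ m → m ≤ a - 1 → m ∈ M)
    (hMnd : ∀ m ∈ M, ¬ a ∣ m) :
    liminf (fun n : ℕ =>
        Real.log (pAM {x : ℕ | ∃ i : ℕ, x = a ^ i} M n) / Real.log n) atTop = 0 ∧
    ¬ Tendsto (fun n : ℕ =>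
        Real.log (pAM {x : ℕ | ∃ i : ℕ, x = a ^ i} M n) / Real.log n) atTop atTop := by
  set F : ℕ → ℝ := fun n =>
    Real.log (pAM {x : ℕ | ∃ i : ℕ, x = a ^ i} M n) / Real.log n with hF
  have h1M : (1 : ℕ) ∈ M := hM1 1 le_rfl (by omega)
  have hnonneg : ∀ n, 0 ≤ F n := fun n =>
    div_nonneg (Real.log_natCast_nonneg _) (Real.log_natCast_nonneg _)
  have hfreq : ∃ᶠ n in atTop, F n = 0 := by
    rw [frequently_atTop]
    intro N
    refine ⟨a ^ N, le_of_lt (Nat.lt_pow_self (n := N) (by omega)), ?_⟩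
    rw [hF]
    simp only
    rw [pAM_pow_eq_one a ha M hMpos h1M hMnd N]
    simp
  constructor
  · apply le_antisymm
    · exact liminf_le_of_frequently_le (hfreq.mono fun n hn => le_of_eq hn)
        (isBoundedUnder_of ⟨0, fun n => hnonneg n⟩)
    · exact le_liminf_of_le
        (IsCoboundedUnder.of_frequently_le (hfreq.mono fun n hn => le_of_eq hn))
        (Eventually.of_forall hnonneg)
  · intro hT
    obtain ⟨n, hn0, hn1⟩ := (hfreq.and_eventually (hT.eventually_ge_atTop 1)).exists
    rw [hn0] at hn1
    linarith
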